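/- Let q ∈ ℂ with q ≠ 0, and suppose q is not a real number lying in the interval (0,1]. Then the series Σ_{n≥1} (|1 − q|·Σ_{ϖ=1}^{n} |q|^{n−ϖ} + |q|^n − 1) diverges; hence complex percolation, i.e. the ℂSG measure with coupling constants t_k = ((1 − q)/q)^k, is not of bounded variation. -/

import Mathlib

open MeasureTheory Filter Finset

attribute [local instance] Classical.propDecidable

noncomputable section

/-- A relation on ℕ representing a naturally labelled past-finite causal set:
a strict partial order `r` with `r i j → i < j`. -/
def CausalRel (r : ℕ → ℕ → Prop) : Prop :=
  (∀ i, ¬ r i i) ∧ (∀ i j k, r i j → r j k → r i k) ∧ (∀ i j, r i j → i < j)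

/-- Ω, the sample space of naturally labelled past-finite causal sets. -/
def Omega : Type := {r : ℕ → ℕ → Prop // CausalRel r}

/-- An `n`-node: a strict partial order on `Fin n` compatible with the labelling. -/
def IsNode {n : ℕ} (p : Fin n → Fin n → Prop) : Prop :=
  (∀ i, ¬ p i i) ∧ (∀ i j k, p i j → p j k → p i k) ∧
    (∀ i j : Fin n, p i j → (i : ℕ) < (j : ℕ))

/-- The cylinder set of an `n`-node. -/
def Cyl {n : ℕ} (p : Fin n → Fin n → Prop) : Set Omega :=
  {r | ∀ i j : Fin n, r.1 i.1 j.1 ↔ p i j}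

/-- The Boolean set algebra 𝔜 generated by the cylinder sets (and Ω itself) under
finite unions, intersections and complements. -/
inductive InAlg : Set Omega → Prop
  | basic {n : ℕ} (hn : 1 ≤ n) (p : Fin n → Fin n → Prop) (hp : IsNode p) : InAlg (Cyl p)
  | univ : InAlg Set.univ
  | compl (s : Set Omega) : InAlg s → InAlg sᶜ
  | union (s t : Set Omega) : InAlg s → InAlg t → InAlg (s ∪ t)

/-- Finite additivity of a complex set function on the algebra 𝔜. -/
def FinitelyAdditive (μ : Set Omega → ℂ) : Prop :=
  ∀ s t : Set Omega, InAlg s → InAlg t → Disjoint s t → μ (s ∪ t) = μ s + μ t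

/-- A finite partition of Ω into pairwise disjoint members of 𝔜. -/
def IsPartition (π : Finset (Set Omega)) : Prop :=
  (∀ s ∈ π, InAlg s) ∧ ((↑π : Set (Set Omega)).Pairwise Disjoint) ∧
    ⋃₀ (↑π : Set (Set Omega)) = Set.univ

/-- Bounded variation: the sums Σᵢ |μ(αᵢ)| over finite partitions of Ω into members
of 𝔜 are uniformly bounded. -/
def BoundedVariation (μ : Set Omega → ℂ) : Prop :=
  ∃ M : ℝ, ∀ π : Finset (Set Omega), IsPartition π → ∑ s ∈ π, ‖μ s‖ ≤ M

/-- λ(a,b) = Σ_{k=b}^{a} C(a−b, k−b)·t_k. -/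
def lam (t : ℕ → ℂ) (a b : ℕ) : ℂ :=
  ∑ k ∈ Finset.Icc b a, ((a - b).choose (k - b) : ℂ) * t k

/-- The maximal elements of a finite subset `I` with respect to the relation `c`. -/
def maxIn {n : ℕ} (c : Fin n → Fin n → Prop) (I : Finset (Fin n)) : Finset (Fin n) :=
  I.filter fun i => ∀ j ∈ I, ¬ c i j

/-- The past of the element `m` in the node `p`. -/
def pastOf {n : ℕ} (p : Fin n → Fin n → Prop) (m : Fin n) : Finset (Fin n) :=
  Finset.univ.filter fun i => p i m

/-- The ℂSG amplitude of (the cylinder set of) an `n`-node: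
∏_{m=1}^{n−1} λ(ϖ_m, μ_m)/λ(m,0). -/
def amp (t : ℕ → ℂ) {n : ℕ} (p : Fin n → Fin n → Prop) : ℂ :=
  ∏ m ∈ Finset.univ.filter (fun m : Fin n => 1 ≤ (m : ℕ)),
    lam t (pastOf p m).card (maxIn p (pastOf p m)).card / lam t (m : ℕ) 0

/-- μ is the ℂSG measure associated to the coupling constants t: it is finitely
additive on 𝔜 and takes the prescribed values on cylinder sets. -/
def IsCSG (t : ℕ → ℂ) (μ : Set Omega → ℂ) : Prop :=
  FinitelyAdditive μ ∧
    ∀ (n : ℕ), 1 ≤ n → ∀ p : Fin n → Fin n → Prop, IsNode p → μ (Cyl p) = amp t p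

/-- `I` is an order ideal (downward-closed set) of the relation `c`. -/
def isIdeal {n : ℕ} (c : Fin n → Fin n → Prop) (I : Finset (Fin n)) : Prop :=
  ∀ j ∈ I, ∀ i, c i j → i ∈ I

/-- Q(c) := Σ_{I an order ideal of c} |λ(|I|, m(I))|. -/
def Qval (t : ℕ → ℂ) {n : ℕ} (c : Fin n → Fin n → Prop) : ℝ :=
  ∑ I ∈ Finset.univ.filter (fun I : Finset (Fin n) => isIdeal c I),
    ‖lam t I.card (maxIn c I).card‖

/-- ζ(c) := Q(c)/|λ(n,0)| − 1. -/
def zeta (t : ℕ → ℂ) {n : ℕ} (c : Fin n → Fin n → Prop) : ℝ :=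
  Qval t c / ‖lam t n 0‖ - 1

/-- ζ_n^a := (Σ_{k=0}^{n} C(n,k)·|t_k|)/|λ(n,0)| − 1. -/
def zetaA (t : ℕ → ℂ) (n : ℕ) : ℝ :=
  (∑ k ∈ Finset.range (n + 1), (n.choose k : ℝ) * ‖t k‖) /
    ‖lam t n 0‖ - 1

/-- ζ_n^c := (|t_0| + Σ_{ϖ=1}^{n} |λ(ϖ,1)|)/|λ(n,0)| − 1. -/
def zetaC (t : ℕ → ℂ) (n : ℕ) : ℝ :=
  (‖t 0‖ + ∑ w ∈ Finset.Icc 1 n, ‖lam t w 1‖) /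
    ‖lam t n 0‖ - 1

/-- S_n := Σ_{p an n-node} |μ(Cyl(p))|. -/
def Svar (μ : Set Omega → ℂ) (n : ℕ) : ℝ :=
  ∑ p : {p : Fin n → Fin n → Prop // IsNode p}, ‖μ (Cyl p.1)‖

-- region facts
lemma region_facts (q : ℂ) (hq : q ≠ 0)
    (hqr : ¬ ∃ x : ℝ, 0 < x ∧ x ≤ 1 ∧ q = (x : ℂ)) :
    0 < ‖q‖ ∧ 0 < ‖1 - q‖ ∧
      1 < ‖1 - q‖ + ‖q‖ := by
  have hr : 0 < ‖q‖ := by simpa using hq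
  have hq1 : q ≠ 1 := by
    rintro rfl
    exact hqr ⟨1, one_pos, le_refl 1, by norm_num⟩
  have hx : 0 < ‖1 - q‖ := by
    simpa [sub_eq_zero] using (sub_ne_zero.mpr (Ne.symm hq1))
  refine ⟨hr, hx, ?_⟩
  have hge : (1:ℝ) ≤ ‖1 - q‖ + ‖q‖ := by
    calc (1:ℝ) = ‖(1 - q) + q‖ := by simp
    _ ≤ _ := norm_add_le _ _
  rcases lt_or_eq_of_le hge with h | h
  · exact h
  · -- equality case: SameRay
    exfalso
    have hsr : SameRay ℝ (1 - q) q := by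
      rw [sameRay_iff_norm_add]
      have he : (1 - q) + q = 1 := by ring
      rw [he]
      simp only [norm_one]
      exact h
    rcases hsr.exists_pos (sub_ne_zero.mpr (Ne.symm hq1)) hq with ⟨r1, r2, hr1, hr2, hE⟩
    have h1 : (r1 : ℂ) * (1 - q) = (r2 : ℂ) * q := by
      simpa [Complex.real_smul] using hE
    have hsum : ((r1 + r2 : ℝ) : ℂ) ≠ 0 := by
      rw [Complex.ofReal_ne_zero]; positivity
    have hqv : q = ((r1/(r1+r2) : ℝ) : ℂ) := by
      push_cast
      rw [eq_div_iff (by push_cast at hsum ⊢; exact hsum)]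
      linear_combination -h1
    apply hqr
    refine ⟨r1/(r1+r2), by positivity, ?_, hqv⟩
    rw [div_le_one (by positivity)]; linarith

/-- chain polynomial: 1 + ζ_n^c -/
def chainB (q : ℂ) (n : ℕ) : ℝ :=
  ‖1 - q‖ * (∑ w ∈ Finset.Icc 1 n, ‖q‖ ^ (n - w)) + ‖q‖ ^ n

lemma chainB_succ (q : ℂ) (n : ℕ) :
    chainB q (n + 1) = ‖q‖ * chainB q n + ‖1 - q‖ := by
  unfold chainB
  rw [show Finset.Icc 1 (n+1) = insert (n+1) (Finset.Icc 1 n) by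
    ext k; simp [Finset.mem_Icc]; omega]
  rw [Finset.sum_insert (by simp)]
  have : ∀ w ∈ Finset.Icc 1 n, ‖q‖ ^ (n + 1 - w) = ‖q‖ * ‖q‖ ^ (n - w) := by
    intro w hw
    rw [Finset.mem_Icc] at hw
    rw [show n + 1 - w = (n - w) + 1 by omega, pow_succ]
    ring
  rw [Finset.sum_congr rfl this]
  have e1 : ∑ w ∈ Finset.Icc 1 n, ‖q‖ * ‖q‖ ^ (n - w)
      = ‖q‖ * ∑ w ∈ Finset.Icc 1 n, ‖q‖ ^ (n - w) := by
    rw [Finset.mul_sum]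
  rw [e1]
  simp only [Nat.sub_self, pow_zero, pow_succ]
  ring

lemma chainB_ge (q : ℂ) (hr : 0 < ‖q‖) (hx : 0 < ‖1 - q‖)
    (hxr : 1 < ‖1 - q‖ + ‖q‖) (n : ℕ) (hn : 1 ≤ n) :
    ‖1 - q‖ + ‖q‖ ≤ chainB q n := by
  induction n with
  | zero => omega
  | succ m ih =>
    rcases Nat.eq_or_lt_of_le hn with h | h
    · simp only [chainB, show m = 0 by omega]
      norm_num
    · have hm : 1 ≤ m := by omega
      have := ih hm
      rw [chainB_succ]
      nlinarith [hr, hx]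

lemma part1 (q : ℂ) (hq : q ≠ 0)
    (hqr : ¬ ∃ x : ℝ, 0 < x ∧ x ≤ 1 ∧ q = (x : ℂ)) :
    ¬ (∃ L : ℝ, Filter.Tendsto (fun N : ℕ => ∑ n ∈ Finset.Ico 1 N,
        (‖1 - q‖ * (∑ w ∈ Finset.Icc 1 n, ‖q‖ ^ (n - w)) +
          ‖q‖ ^ n - 1)) Filter.atTop (nhds L)) := by
  obtain ⟨hr, hx, hxr⟩ := region_facts q hq hqr
  rintro ⟨L, hL⟩
  set δ := ‖1 - q‖ + ‖q‖ - 1 with hδ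
  have hδpos : 0 < δ := by simp only [hδ]; linarith
  have hlow : ∀ N : ℕ, (N - 1 : ℕ) * δ ≤ ∑ n ∈ Finset.Ico 1 N,
      (‖1 - q‖ * (∑ w ∈ Finset.Icc 1 n, ‖q‖ ^ (n - w)) +
        ‖q‖ ^ n - 1) := by
    intro N
    have : ∀ n ∈ Finset.Ico 1 N, δ ≤
        ‖1 - q‖ * (∑ w ∈ Finset.Icc 1 n, ‖q‖ ^ (n - w)) +
          ‖q‖ ^ n - 1 := by
      intro n hn
      rw [Finset.mem_Ico] at hn
      have := chainB_ge q hr hx hxr n hn.1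
      simp only [chainB] at this
      simp only [hδ]
      linarith
    calc ((N - 1 : ℕ) : ℝ) * δ = (Finset.Ico 1 N).card * δ := by
          rw [Nat.card_Ico]
      _ = ∑ _n ∈ Finset.Ico 1 N, δ := by rw [Finset.sum_const, nsmul_eq_mul]
      _ ≤ _ := Finset.sum_le_sum this
  have htop : Filter.Tendsto (fun N : ℕ => ∑ n ∈ Finset.Ico 1 N,
      (‖1 - q‖ * (∑ w ∈ Finset.Icc 1 n, ‖q‖ ^ (n - w)) +
        ‖q‖ ^ n - 1)) Filter.atTop Filter.atTop := by
    apply Filter.tendsto_atTop_mono hlow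
    apply Filter.Tendsto.atTop_mul_const hδpos
    exact tendsto_natCast_atTop_atTop.comp (Filter.tendsto_sub_atTop_nat 1)
  exact not_tendsto_nhds_of_tendsto_atTop htop L hL

section Perc
variable (q : ℂ)

lemma lam_eq (hq : q ≠ 0) (t : ℕ → ℂ) (ht : ∀ k, t k = ((1 - q) / q) ^ k)
    (a b : ℕ) (hba : b ≤ a) :
    lam t a b = ((1 - q) / q) ^ b * (q⁻¹) ^ (a - b) := by
  unfold lam
  have hmap : Finset.Icc b a = (Finset.range (a - b + 1)).map
      ⟨fun j => b + j, add_right_injective b⟩ := by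
    ext k; simp only [Finset.mem_Icc, Finset.mem_map, Finset.mem_range,
      Function.Embedding.coeFn_mk]
    constructor
    · rintro ⟨h1, h2⟩; exact ⟨k - b, by omega, by omega⟩
    · rintro ⟨j, hj, rfl⟩; omega
  rw [hmap, Finset.sum_map]
  simp only [Function.Embedding.coeFn_mk, Nat.add_sub_cancel_left]
  have : ∀ j ∈ Finset.range (a - b + 1),
      ((a - b).choose j : ℂ) * t (b + j)
        = ((1 - q)/q) ^ b * (((1-q)/q) ^ j * 1 ^ (a - b - j) * ((a-b).choose j : ℂ)) := by
    intro j hj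
    rw [ht (b + j), pow_add]
    ring
  rw [Finset.sum_congr rfl this, ← Finset.mul_sum, ← add_pow]
  congr 1
  have : (1 - q)/q + 1 = q⁻¹ := by field_simp; ring
  rw [this]

lemma lam_abs (hq : q ≠ 0) (t : ℕ → ℂ) (ht : ∀ k, t k = ((1 - q) / q) ^ k)
    (a b : ℕ) (hba : b ≤ a) :
    ‖lam t a b‖
      = ‖1 - q‖ ^ b * ((‖q‖)⁻¹) ^ a := by
  rw [lam_eq q hq t ht a b hba]
  rw [norm_mul, norm_pow, norm_pow, norm_div, norm_inv]
  have e : ((‖q‖)⁻¹) ^ a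
      = ((‖q‖)⁻¹) ^ b * ((‖q‖)⁻¹) ^ (a - b) := by
    rw [← pow_add]; congr 1; omega
  rw [e, div_pow, div_eq_mul_inv, ← inv_pow]
  ring
end Perc

section GSec
variable (x r : ℝ)

/-- relative ideal-sum function -/
def Gfun {n : ℕ} (c : Fin n → Fin n → Prop) (D P : Finset (Fin n)) : ℝ :=
  ∑ J ∈ Finset.univ.filter
      (fun J : Finset (Fin n) => isIdeal c J ∧ P ⊆ J ∧ J ⊆ D),
    x ^ ((maxIn c J) \ P).card * r ^ (D.card - J.card)

def chainP (m : ℕ) : ℝ := r ^ m + x * ∑ w ∈ Finset.Icc 1 m, r ^ (m - w)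

lemma chainP_succ (m : ℕ) : chainP x r (m + 1) = r * chainP x r m + x := by
  unfold chainP
  rw [show Finset.Icc 1 (m+1) = insert (m+1) (Finset.Icc 1 m) by
    ext k; simp [Finset.mem_Icc]; omega]
  rw [Finset.sum_insert (by simp)]
  have h1 : ∀ w ∈ Finset.Icc 1 m, r ^ (m + 1 - w) = r * r ^ (m - w) := by
    intro w hw; rw [Finset.mem_Icc] at hw
    rw [show m + 1 - w = (m - w) + 1 by omega, pow_succ]; ring
  rw [Finset.sum_congr rfl h1]
  have e1 : ∑ w ∈ Finset.Icc 1 m, r * r ^ (m - w)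
      = r * ∑ w ∈ Finset.Icc 1 m, r ^ (m - w) := by rw [Finset.mul_sum]
  rw [e1]
  simp only [Nat.sub_self, pow_zero, pow_succ]
  ring

end GSec

section Ideals
variable {n : ℕ} {c : Fin n → Fin n → Prop}

lemma pastOf_ideal (hc : IsNode c) (e : Fin n) : isIdeal c (pastOf c e) := by
  intro j hj i hij
  simp only [pastOf, Finset.mem_filter, Finset.mem_univ, true_and] at hj ⊢
  exact hc.2.1 _ _ _ hij hj

lemma union_ideal {P Q : Finset (Fin n)} (hP : isIdeal c P) (hQ : isIdeal c Q) :
    isIdeal c (P ∪ Q) := by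
  intro j hj i hij
  rw [Finset.mem_union] at hj ⊢
  rcases hj with h | h
  · exact Or.inl (hP _ h _ hij)
  · exact Or.inr (hQ _ h _ hij)

lemma erase_ideal (hc : IsNode c) {D : Finset (Fin n)} {e : Fin n}
    (hD : isIdeal c D) (hmax : ∀ j ∈ D, ¬ c e j) : isIdeal c (D.erase e) := by
  intro j hj i hij
  rw [Finset.mem_erase] at hj ⊢
  refine ⟨?_, hD _ hj.2 _ hij⟩
  rintro rfl
  exact hmax _ hj.2 hij

lemma empty_ideal : isIdeal c (∅ : Finset (Fin n)) := by
  intro j hj; simp at hj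

/-- existence of a maximal element of `D` outside `P`, and the G recursion. -/
lemma Gfun_rec (x r : ℝ) (hc : IsNode c) (D P : Finset (Fin n))
    (hD : isIdeal c D) (hP : isIdeal c P) (hPD : P ⊆ D) (hne : ¬ D ⊆ P) :
    ∃ e, e ∈ D ∧ e ∉ P ∧ (∀ j ∈ D, ¬ c e j) ∧
      Gfun x r c D P = r * Gfun x r c (D.erase e) P
        + x * Gfun x r c (D.erase e) (P ∪ pastOf c e) := by
  have hDP : (D \ P).Nonempty := by
    rw [Finset.sdiff_nonempty]; exact hne
  set e := (D \ P).max' hDP with he_def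
  have heDP : e ∈ D \ P := (D \ P).max'_mem hDP
  rw [Finset.mem_sdiff] at heDP
  obtain ⟨heD, heP⟩ := heDP
  have hemax : ∀ j ∈ D, ¬ c e j := by
    intro j hj hcj
    have hlt : (e : ℕ) < (j : ℕ) := hc.2.2 _ _ hcj
    by_cases hjP : j ∈ P
    · exact heP (hP _ hjP _ hcj)
    · have : j ≤ e := Finset.le_max' _ _ (Finset.mem_sdiff.mpr ⟨hj, hjP⟩)
      rw [Fin.le_def] at this
      omega
  refine ⟨e, heD, heP, hemax, ?_⟩
  unfold Gfun
  rw [← Finset.sum_filter_add_sum_filter_not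
    (Finset.univ.filter (fun J : Finset (Fin n) => isIdeal c J ∧ P ⊆ J ∧ J ⊆ D))
    (fun J => e ∈ J)]
  rw [add_comm]
  congr 1
  · -- e ∉ J part equals r * Gfun (D.erase e) P
    rw [Finset.filter_filter, Finset.mul_sum]
    have hfe : Finset.univ.filter
        (fun J : Finset (Fin n) => (isIdeal c J ∧ P ⊆ J ∧ J ⊆ D) ∧ e ∉ J)
        = Finset.univ.filter
        (fun J : Finset (Fin n) => isIdeal c J ∧ P ⊆ J ∧ J ⊆ D.erase e) := by
      apply Finset.filter_congr
      intro J _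
      simp only [Finset.subset_erase, eq_iff_iff]
      tauto
    rw [hfe]
    apply Finset.sum_congr rfl
    intro J hJ
    simp only [Finset.mem_filter] at hJ
    obtain ⟨-, -, -, hJD⟩ := hJ
    have hJcard : J.card ≤ D.card - 1 := by
      have := Finset.card_le_card hJD
      rwa [Finset.card_erase_of_mem heD] at this
    have hD1 : 1 ≤ D.card := Finset.card_pos.mpr ⟨e, heD⟩
    rw [Finset.card_erase_of_mem heD]
    rw [show D.card - J.card = (D.card - 1 - J.card) + 1 by omega, pow_succ]
    ring
  · -- e ∈ J part equals x * Gfun (D.erase e) (P ∪ pastOf c e)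
    rw [Finset.mul_sum]
    refine Finset.sum_nbij' (fun J => J.erase e) (fun J1 => insert e J1) ?_ ?_ ?_ ?_ ?_
    · -- membership forward
      intro J hJ
      simp only [Finset.mem_filter, Finset.mem_univ, true_and] at hJ ⊢
      obtain ⟨⟨hJi, hPJ, hJD⟩, heJ⟩ := hJ
      refine ⟨?_, ?_, Finset.erase_subset_erase _ hJD⟩
      · intro j hj i hij
        rw [Finset.mem_erase] at hj ⊢
        refine ⟨?_, hJi _ hj.2 _ hij⟩
        rintro rfl
        exact hemax _ (hJD hj.2) hij
      · rw [Finset.union_subset_iff]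
        constructor
        · intro p hp
          rw [Finset.mem_erase]
          exact ⟨fun h => heP (h ▸ hp), hPJ hp⟩
        · intro i hi
          simp only [pastOf, Finset.mem_filter] at hi
          rw [Finset.mem_erase]
          exact ⟨fun h => hc.1 e (h ▸ hi.2), hJi _ heJ _ hi.2⟩
    · -- membership backward
      intro J1 hJ1
      simp only [Finset.mem_filter, Finset.mem_univ, true_and] at hJ1 ⊢
      obtain ⟨hJi, hPJ, hJD⟩ := hJ1
      rw [Finset.union_subset_iff] at hPJ
      refine ⟨⟨?_, ?_, ?_⟩, Finset.mem_insert_self _ _⟩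
      · intro j hj i hij
        rw [Finset.mem_insert] at hj ⊢
        rcases hj with rfl | hj
        · right
          apply hPJ.2
          simp only [pastOf, Finset.mem_filter, Finset.mem_univ, true_and]
          exact hij
        · exact Or.inr (hJi _ hj _ hij)
      · intro p hp
        exact Finset.mem_insert_of_mem (hPJ.1 hp)
      · rw [Finset.insert_subset_iff]
        exact ⟨heD, hJD.trans (Finset.erase_subset _ _)⟩
    · intro J hJ
      simp only [Finset.mem_filter, Finset.mem_univ, true_and] at hJ
      exact Finset.insert_erase hJ.2
    · intro J1 hJ1
      simp only [Finset.mem_filter, Finset.mem_univ, true_and] at hJ1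
      apply Finset.erase_insert
      intro h
      exact (Finset.mem_erase.mp (hJ1.2.2 h)).1 rfl
    · -- term equality
      intro J hJ
      simp only [Finset.mem_filter, Finset.mem_univ, true_and] at hJ
      obtain ⟨⟨hJi, hPJ, hJD⟩, heJ⟩ := hJ
      have hset : maxIn c J \ P
          = insert e ((maxIn c (J.erase e)) \ (P ∪ pastOf c e)) := by
        ext i
        simp only [Finset.mem_sdiff, Finset.mem_insert, maxIn, Finset.mem_filter,
          Finset.mem_erase, Finset.mem_union, pastOf, Finset.mem_univ, true_and]
        constructor
        · rintro ⟨⟨hiJ, hmaxi⟩, hiP⟩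
          by_cases hie : i = e
          · exact Or.inl hie
          · refine Or.inr ⟨⟨⟨hie, hiJ⟩, ?_⟩, ?_⟩
            · intro j hj
              exact hmaxi _ hj.2
            · push_neg
              exact ⟨hiP, fun h => (hmaxi e heJ) h⟩
        · rintro (rfl | ⟨⟨⟨hie, hiJ⟩, hmaxi⟩, hiPp⟩)
          · exact ⟨⟨heJ, fun j hj => hemax j (hJD hj)⟩, heP⟩
          · push_neg at hiPp
            refine ⟨⟨hiJ, ?_⟩, hiPp.1⟩
            intro j hj
            by_cases hje : j = e
            · subst hje; exact hiPp.2
            · exact hmaxi j ⟨hje, hj⟩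
      have henotin : e ∉ (maxIn c (J.erase e)) \ (P ∪ pastOf c e) := by
        intro h
        rw [Finset.mem_sdiff] at h
        have := h.1
        simp only [maxIn, Finset.mem_filter, Finset.mem_erase] at this
        exact this.1.1 rfl
      rw [hset, Finset.card_insert_of_notMem henotin]
      have hJcard : 1 ≤ J.card := Finset.card_pos.mpr ⟨e, heJ⟩
      have hJD' : J.card ≤ D.card := Finset.card_le_card hJD
      rw [Finset.card_erase_of_mem heD, Finset.card_erase_of_mem heJ]
      rw [show D.card - 1 - (J.card - 1) = D.card - J.card by omega, pow_succ]
      ring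

end Ideals

section GBounds
variable {n : ℕ} {c : Fin n → Fin n → Prop}

lemma Gfun_self (x r : ℝ) (P : Finset (Fin n)) (hP : isIdeal c P) :
    Gfun x r c P P = 1 := by
  unfold Gfun
  have hfe : Finset.univ.filter
      (fun J : Finset (Fin n) => isIdeal c J ∧ P ⊆ J ∧ J ⊆ P) = {P} := by
    ext J
    simp only [Finset.mem_filter, Finset.mem_univ, true_and, Finset.mem_singleton]
    constructor
    · rintro ⟨-, h1, h2⟩; exact Finset.Subset.antisymm h2 h1
    · rintro rfl; exact ⟨hP, Finset.Subset.refl _, Finset.Subset.refl _⟩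
  rw [hfe, Finset.sum_singleton]
  have h1 : maxIn c P \ P = ∅ := by
    rw [Finset.sdiff_eq_empty_iff_subset]
    exact Finset.filter_subset _ _
  rw [h1]
  simp

lemma Gfun_ge_one (x r : ℝ) (hx : 0 < x) (hr : 0 < r) (hxr : 1 ≤ x + r)
    (hc : IsNode c) :
    ∀ k (D P : Finset (Fin n)), (D \ P).card = k →
      isIdeal c D → isIdeal c P → P ⊆ D → 1 ≤ Gfun x r c D P := by
  intro k
  induction k using Nat.strong_induction_on with
  | _ k ih =>
    intro D P hk hD hP hPD
    by_cases hsub : D ⊆ P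
    · have : D = P := Finset.Subset.antisymm hsub hPD
      subst this
      rw [Gfun_self x r D hD]
    · obtain ⟨e, heD, heP, hemax, heq⟩ := Gfun_rec x r hc D P hD hP hPD hsub
      have hkpos : 0 < k := by
        rw [← hk]
        exact Finset.card_pos.mpr ⟨e, Finset.mem_sdiff.mpr ⟨heD, heP⟩⟩
      have hD1 : isIdeal c (D.erase e) := erase_ideal hc hD hemax
      have hpast : isIdeal c (pastOf c e) := pastOf_ideal hc e
      have hPD1 : P ⊆ D.erase e := by
        intro p hp
        rw [Finset.mem_erase]
        exact ⟨fun h => heP (h ▸ hp), hPD hp⟩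
      have hpastD1 : pastOf c e ⊆ D.erase e := by
        intro i hi
        simp only [pastOf, Finset.mem_filter, Finset.mem_univ, true_and] at hi
        rw [Finset.mem_erase]
        exact ⟨fun h => hc.1 e (h ▸ hi), hD _ heD _ hi⟩
      have hc1 : (D.erase e \ P).card < k := by
        have : D.erase e \ P = (D \ P).erase e := by
          ext i
          simp only [Finset.mem_sdiff, Finset.mem_erase]
          tauto
        rw [this, Finset.card_erase_of_mem (Finset.mem_sdiff.mpr ⟨heD, heP⟩), hk]
        omega
      have hc2 : (D.erase e \ (P ∪ pastOf c e)).card < k := by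
        have hss : D.erase e \ (P ∪ pastOf c e) ⊆ (D \ P).erase e := by
          intro i hi
          simp only [Finset.mem_sdiff, Finset.mem_erase, Finset.mem_union] at hi ⊢
          push_neg at hi
          exact ⟨hi.1.1, hi.1.2, hi.2.1⟩
        calc (D.erase e \ (P ∪ pastOf c e)).card ≤ ((D \ P).erase e).card :=
              Finset.card_le_card hss
          _ < k := by
            rw [Finset.card_erase_of_mem (Finset.mem_sdiff.mpr ⟨heD, heP⟩), hk]
            omega
      have g1 := ih _ hc1 (D.erase e) P rfl hD1 hP hPD1
      have g2 := ih _ hc2 (D.erase e) (P ∪ pastOf c e) rfl hD1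
        (union_ideal hP hpast) (Finset.union_subset hPD1 hpastD1)
      rw [heq]
      nlinarith

lemma Gfun_ge_chain (x r : ℝ) (hx : 0 < x) (hr : 0 < r) (hxr : 1 ≤ x + r)
    (hc : IsNode c) :
    ∀ k (D : Finset (Fin n)), D.card = k → isIdeal c D →
      chainP x r D.card ≤ Gfun x r c D ∅ := by
  intro k
  induction k using Nat.strong_induction_on with
  | _ k ih =>
    intro D hk hD
    by_cases hsub : D ⊆ ∅
    · have : D = ∅ := Finset.subset_empty.mp hsub
      subst this
      rw [Gfun_self x r ∅ empty_ideal]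
      simp [chainP]
    · obtain ⟨e, heD, -, hemax, heq⟩ :=
        Gfun_rec x r hc D ∅ hD empty_ideal (Finset.empty_subset _) hsub
      have hD1 : isIdeal c (D.erase e) := erase_ideal hc hD hemax
      have hpast : isIdeal c (pastOf c e) := pastOf_ideal hc e
      have hpastD1 : pastOf c e ⊆ D.erase e := by
        intro i hi
        simp only [pastOf, Finset.mem_filter, Finset.mem_univ, true_and] at hi
        rw [Finset.mem_erase]
        exact ⟨fun h => hc.1 e (h ▸ hi), hD _ heD _ hi⟩
      have hcard : (D.erase e).card = D.card - 1 := Finset.card_erase_of_mem heD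
      have hDpos : 0 < D.card := Finset.card_pos.mpr ⟨e, heD⟩
      have hlt : (D.erase e).card < k := by omega
      have g1 := ih _ hlt (D.erase e) rfl hD1
      have g2 := Gfun_ge_one x r hx hr hxr hc _ (D.erase e) (pastOf c e) rfl
        hD1 hpast hpastD1
      have g2' : 1 ≤ Gfun x r c (D.erase e) (∅ ∪ pastOf c e) := by
        rwa [Finset.empty_union]
      rw [heq]
      have : D.card = (D.card - 1) + 1 := by omega
      rw [this, chainP_succ, ← hcard]
      nlinarith [g1, g2', hr, hx]
end GBounds

section Extend
variable {n : ℕ}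

def restrictNode (p : Fin (n+1) → Fin (n+1) → Prop) : Fin n → Fin n → Prop :=
  fun i j => p i.castSucc j.castSucc

def idealOf (p : Fin (n+1) → Fin (n+1) → Prop) : Finset (Fin n) :=
  Finset.univ.filter fun i => p i.castSucc (Fin.last n)

def extendNode (c : Fin n → Fin n → Prop) (I : Finset (Fin n)) :
    Fin (n+1) → Fin (n+1) → Prop :=
  fun i j =>
    if hi : (i : ℕ) < n then
      (if hj : (j : ℕ) < n then c ⟨i, hi⟩ ⟨j, hj⟩ else (⟨i, hi⟩ : Fin n) ∈ I)
    else False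

lemma restrict_isNode {p : Fin (n+1) → Fin (n+1) → Prop} (hp : IsNode p) :
    IsNode (restrictNode p) := by
  refine ⟨fun i => hp.1 _, fun i j k hij hjk => hp.2.1 _ _ _ hij hjk, ?_⟩
  intro i j hij
  have := hp.2.2 _ _ hij
  simpa using this

lemma idealOf_isIdeal {p : Fin (n+1) → Fin (n+1) → Prop} (hp : IsNode p) :
    isIdeal (restrictNode p) (idealOf p) := by
  intro j hj i hij
  simp only [idealOf, Finset.mem_filter, Finset.mem_univ, true_and] at hj ⊢
  exact hp.2.1 _ _ _ hij hj

lemma extend_isNode {c : Fin n → Fin n → Prop} {I : Finset (Fin n)}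
    (hc : IsNode c) (hI : isIdeal c I) : IsNode (extendNode c I) := by
  refine ⟨?_, ?_, ?_⟩
  · intro i h
    unfold extendNode at h
    by_cases hi : (i : ℕ) < n
    · rw [dif_pos hi, dif_pos hi] at h
      exact hc.1 _ h
    · rw [dif_neg hi] at h
      exact h
  · intro i j k hij hjk
    unfold extendNode at hij hjk ⊢
    by_cases hi : (i : ℕ) < n
    · rw [dif_pos hi] at hij ⊢
      by_cases hj : (j : ℕ) < n
      · rw [dif_pos hj] at hij
        rw [dif_pos hj] at hjk
        by_cases hk : (k : ℕ) < n
        · rw [dif_pos hk] at hjk ⊢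
          exact hc.2.1 _ _ _ hij hjk
        · rw [dif_neg hk] at hjk ⊢
          exact hI _ hjk _ hij
      · rw [dif_neg hj] at hjk
        exact absurd hjk (fun h => h)
    · rw [dif_neg hi] at hij
      exact absurd hij (fun h => h)
  · intro i j hij
    unfold extendNode at hij
    by_cases hi : (i : ℕ) < n
    · rw [dif_pos hi] at hij
      by_cases hj : (j : ℕ) < n
      · rw [dif_pos hj] at hij
        exact hc.2.2 _ _ hij
      · have : (j : ℕ) = n := by omega
        omega
    · rw [dif_neg hi] at hij
      exact absurd hij (fun h => h)

lemma restrict_extend (c : Fin n → Fin n → Prop) (I : Finset (Fin n)) :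
    restrictNode (extendNode c I) = c := by
  funext i j
  show extendNode c I i.castSucc j.castSucc = c i j
  unfold extendNode
  have hi : ((i.castSucc : Fin (n+1)) : ℕ) < n := by simp [i.isLt]
  have hj : ((j.castSucc : Fin (n+1)) : ℕ) < n := by simp [j.isLt]
  rw [dif_pos hi, dif_pos hj]
  congr 1 <;> apply Fin.ext <;> simp

lemma idealOf_extend (c : Fin n → Fin n → Prop) (I : Finset (Fin n)) :
    idealOf (extendNode c I) = I := by
  ext i
  simp only [idealOf, Finset.mem_filter, Finset.mem_univ, true_and]
  unfold extendNode
  have hi : ((i.castSucc : Fin (n+1)) : ℕ) < n := by simp [i.isLt]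
  have hl : ¬ ((Fin.last n : Fin (n+1)) : ℕ) < n := by simp
  rw [dif_pos hi, dif_neg hl]
  constructor
  · intro h
    have : (⟨((i.castSucc : Fin (n+1)) : ℕ), hi⟩ : Fin n) = i := by
      apply Fin.ext; simp
    rwa [this] at h
  · intro h
    have : (⟨((i.castSucc : Fin (n+1)) : ℕ), hi⟩ : Fin n) = i := by
      apply Fin.ext; simp
    rwa [this]

lemma extend_restrict {p : Fin (n+1) → Fin (n+1) → Prop} (hp : IsNode p) :
    extendNode (restrictNode p) (idealOf p) = p := by
  funext i j
  unfold extendNode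
  by_cases hi : (i : ℕ) < n
  · rw [dif_pos hi]
    by_cases hj : (j : ℕ) < n
    · rw [dif_pos hj]
      show restrictNode p _ _ = _
      unfold restrictNode
      have e1 : (⟨(i : ℕ), hi⟩ : Fin n).castSucc = i := by apply Fin.ext; simp
      have e2 : (⟨(j : ℕ), hj⟩ : Fin n).castSucc = j := by apply Fin.ext; simp
      rw [e1, e2]
    · rw [dif_neg hj]
      have hjl : j = Fin.last n := by
        apply Fin.ext; simp only [Fin.val_last]; omega
      simp only [idealOf, Finset.mem_filter, Finset.mem_univ, true_and]
      have e1 : (⟨(i : ℕ), hi⟩ : Fin n).castSucc = i := by apply Fin.ext; simp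
      rw [e1, hjl]
  · rw [dif_neg hi]
    have hil : (i : ℕ) = n := by omega
    apply propext
    constructor
    · intro h; exact absurd h (fun h => h)
    · intro h
      have := hp.2.2 _ _ h
      omega

lemma maxIn_map (p : Fin (n+1) → Fin (n+1) → Prop) (S : Finset (Fin n)) :
    maxIn p (S.map Fin.castSuccEmb)
      = (maxIn (restrictNode p) S).map Fin.castSuccEmb := by
  ext i
  simp only [maxIn, Finset.mem_filter, Finset.mem_map, Fin.castSuccEmb,
    Function.Embedding.coeFn_mk]
  constructor
  · rintro ⟨⟨i0, hi0, rfl⟩, hmax⟩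
    refine ⟨i0, ⟨hi0, ?_⟩, rfl⟩
    intro j hj hcj
    exact hmax j.castSucc ⟨j, hj, rfl⟩ hcj
  · rintro ⟨i0, ⟨hi0, hmax⟩, rfl⟩
    refine ⟨⟨i0, hi0, rfl⟩, ?_⟩
    rintro j ⟨j0, hj0, rfl⟩ hcj
    exact hmax j0 hj0 hcj

lemma pastOf_castSucc {p : Fin (n+1) → Fin (n+1) → Prop} (hp : IsNode p)
    (m : Fin n) :
    pastOf p m.castSucc = (pastOf (restrictNode p) m).map Fin.castSuccEmb := by
  ext i
  simp only [pastOf, Finset.mem_filter, Finset.mem_univ, true_and,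
    Finset.mem_map, Fin.castSuccEmb, Function.Embedding.coeFn_mk]
  constructor
  · intro h
    have hlt : (i : ℕ) < n := by
      have := hp.2.2 _ _ h
      have : (i : ℕ) < (m.castSucc : ℕ) := this
      simp only [Fin.coe_castSucc] at this
      omega
    refine ⟨⟨(i : ℕ), hlt⟩, ?_, by apply Fin.ext; simp⟩
    show p _ _
    have e1 : (⟨(i : ℕ), hlt⟩ : Fin n).castSucc = i := by apply Fin.ext; simp
    rw [e1]
    exact h
  · rintro ⟨i0, hi0, rfl⟩
    exact hi0

lemma pastOf_last {p : Fin (n+1) → Fin (n+1) → Prop} (hp : IsNode p) :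
    pastOf p (Fin.last n) = (idealOf p).map Fin.castSuccEmb := by
  ext i
  simp only [pastOf, idealOf, Finset.mem_filter, Finset.mem_univ, true_and,
    Finset.mem_map, Fin.castSuccEmb, Function.Embedding.coeFn_mk]
  constructor
  · intro h
    have hlt : (i : ℕ) < n := by
      have := hp.2.2 _ _ h
      simpa using this
    refine ⟨⟨(i : ℕ), hlt⟩, ?_, by apply Fin.ext; simp⟩
    have e1 : (⟨(i : ℕ), hlt⟩ : Fin n).castSucc = i := by apply Fin.ext; simp
    rw [e1]
    exact h
  · rintro ⟨i0, hi0, rfl⟩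
    exact hi0

lemma amp_factor (t : ℕ → ℂ) (hn : 1 ≤ n) {p : Fin (n+1) → Fin (n+1) → Prop}
    (hp : IsNode p) :
    amp t p = amp t (restrictNode p) *
      (lam t (idealOf p).card (maxIn (restrictNode p) (idealOf p)).card
        / lam t n 0) := by
  unfold amp
  rw [Finset.prod_filter, Fin.prod_univ_castSucc]
  congr 1
  · rw [Finset.prod_filter]
    apply Finset.prod_congr rfl
    intro m _
    have hcoe : ((m.castSucc : Fin (n+1)) : ℕ) = (m : ℕ) := by simp
    rw [hcoe]
    congr 1
    rw [pastOf_castSucc hp m, maxIn_map, Finset.card_map, Finset.card_map]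
  · have hcoe : ((Fin.last n : Fin (n+1)) : ℕ) = n := by simp
    rw [hcoe, if_pos hn]
    rw [pastOf_last hp, maxIn_map, Finset.card_map, Finset.card_map]

end Extend

section SSec

def nodesF (n : ℕ) : Finset (Fin n → Fin n → Prop) :=
  Finset.univ.filter IsNode

def SB (t : ℕ → ℂ) (n : ℕ) : ℝ :=
  ∑ p ∈ nodesF n, ‖amp t p‖

lemma ratio_eq (r : ℝ) (hr : 0 < r) (a n : ℕ) (h : a ≤ n) :
    (r⁻¹) ^ a / (r⁻¹) ^ n = r ^ (n - a) := by
  have hrne : r ≠ 0 := hr.ne'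
  rw [show n = a + (n - a) by omega, pow_add]
  field_simp
  rw [Nat.add_sub_cancel_left, one_div, inv_pow, inv_mul_cancel₀ (pow_ne_zero _ hrne)]

lemma SB_succ_eq (q : ℂ) (hq : q ≠ 0) (t : ℕ → ℂ) (ht : ∀ k, t k = ((1 - q) / q) ^ k)
    {n : ℕ} (hn : 1 ≤ n) :
    SB t (n + 1) = ∑ c ∈ nodesF n, ‖amp t c‖
      * Gfun (‖1 - q‖) (‖q‖) c Finset.univ ∅ := by
  set x := ‖1 - q‖
  set r := ‖q‖
  have hr : 0 < r := by simpa [r] using hq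
  unfold SB
  rw [show (∑ c ∈ nodesF n, ‖amp t c‖
      * Gfun x r c Finset.univ ∅)
    = ∑ c ∈ nodesF n, ∑ I ∈ Finset.univ.filter (fun I => isIdeal c I),
        ‖amp t c‖ * (x ^ (maxIn c I).card * r ^ (n - I.card)) by
      apply Finset.sum_congr rfl
      intro c _
      rw [Gfun, Finset.mul_sum]
      have hfe : Finset.univ.filter
          (fun J : Finset (Fin n) => isIdeal c J ∧ ∅ ⊆ J ∧ J ⊆ Finset.univ)
          = Finset.univ.filter (fun I : Finset (Fin n) => isIdeal c I) := by
        apply Finset.filter_congr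
        intro J _
        simp
      rw [hfe]
      apply Finset.sum_congr rfl
      intro I _
      congr 2
      · rw [Finset.sdiff_empty]
      · rw [Finset.card_univ, Fintype.card_fin]]
  rw [Finset.sum_sigma' (nodesF n) (fun c => Finset.univ.filter (fun I => isIdeal c I))
    (fun c I => ‖amp t c‖ * (x ^ (maxIn c I).card * r ^ (n - I.card)))]
  symm
  refine Finset.sum_nbij'
    (fun s => extendNode s.1 s.2) (fun p => ⟨restrictNode p, idealOf p⟩)
    ?_ ?_ ?_ ?_ ?_
  · rintro ⟨c, I⟩ hs
    simp only [Finset.mem_sigma, nodesF, Finset.mem_filter, Finset.mem_univ,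
      true_and] at hs ⊢
    exact extend_isNode hs.1 hs.2
  · intro p hp
    simp only [Finset.mem_sigma, nodesF, Finset.mem_filter, Finset.mem_univ,
      true_and] at hp ⊢
    exact ⟨restrict_isNode hp, idealOf_isIdeal hp⟩
  · rintro ⟨c, I⟩ hs
    simp only [Finset.mem_sigma, nodesF, Finset.mem_filter, Finset.mem_univ,
      true_and] at hs
    have h1 := restrict_extend c I
    have h2 := idealOf_extend c I
    exact Sigma.ext h1 (heq_of_eq h2)
  · intro p hp
    simp only [nodesF, Finset.mem_filter, Finset.mem_univ, true_and] at hp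
    exact extend_restrict hp
  · rintro ⟨c, I⟩ hs
    simp only [Finset.mem_sigma, nodesF, Finset.mem_filter, Finset.mem_univ,
      true_and] at hs
    obtain ⟨hc, hI⟩ := hs
    have hnode := extend_isNode hc hI
    symm
    show ‖amp t (extendNode c I)‖ = _
    rw [amp_factor t hn hnode, norm_mul, norm_div]
    rw [restrict_extend c I, idealOf_extend c I]
    have hmle : (maxIn c I).card ≤ I.card :=
      Finset.card_le_card (Finset.filter_subset _ _)
    have hIle : I.card ≤ n := by
      have := Finset.card_le_card (Finset.subset_univ I)
      rwa [Finset.card_univ, Fintype.card_fin] at this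
    rw [lam_abs q hq t ht I.card (maxIn c I).card hmle,
      lam_abs q hq t ht n 0 (Nat.zero_le _)]
    rw [pow_zero, one_mul]
    rw [show x ^ (maxIn c I).card * (r⁻¹) ^ I.card / (r⁻¹) ^ n
        = x ^ (maxIn c I).card * ((r⁻¹) ^ I.card / (r⁻¹) ^ n) by ring]
    rw [ratio_eq r hr I.card n hIle]

lemma SB_one_ge (t : ℕ → ℂ) : 1 ≤ SB t 1 := by
  have hmem : (fun _ _ => False : Fin 1 → Fin 1 → Prop) ∈ nodesF 1 := by
    simp only [nodesF, Finset.mem_filter, Finset.mem_univ, true_and]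
    exact ⟨fun i h => h, fun i j k h _ => absurd h (fun h => h),
      fun i j h => absurd h (fun h => h)⟩
  have hamp : amp t (fun _ _ => False : Fin 1 → Fin 1 → Prop) = 1 := by
    unfold amp
    rw [Finset.prod_eq_one]
    intro m hm
    simp only [Finset.mem_filter] at hm
    omega
  calc (1 : ℝ) = ‖amp t (fun _ _ => False : Fin 1 → Fin 1 → Prop)‖ := by
        rw [hamp]; simp
    _ ≤ SB t 1 := Finset.single_le_sum
        (f := fun p : Fin 1 → Fin 1 → Prop => ‖amp t p‖)
        (fun p _ => norm_nonneg _) hmem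

lemma SB_nonneg (t : ℕ → ℂ) (n : ℕ) : 0 ≤ SB t n :=
  Finset.sum_nonneg (fun p _ => norm_nonneg _)

lemma SB_ge_pow (q : ℂ) (hq : q ≠ 0)
    (hqr : ¬ ∃ y : ℝ, 0 < y ∧ y ≤ 1 ∧ q = (y : ℂ))
    (t : ℕ → ℂ) (ht : ∀ k, t k = ((1 - q) / q) ^ k) (n : ℕ) (hn : 1 ≤ n) :
    (‖1 - q‖ + ‖q‖) ^ (n - 1) ≤ SB t n := by
  obtain ⟨hr, hx, hxr⟩ := region_facts q hq hqr
  set x := ‖1 - q‖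
  set r := ‖q‖
  induction n with
  | zero => omega
  | succ m ih =>
    rcases Nat.eq_or_lt_of_le hn with h | h
    · have : m = 0 := by omega
      subst this
      simpa using SB_one_ge t
    · have hm : 1 ≤ m := by omega
      have hrec := SB_succ_eq q hq t ht hm
      have hbound : ∀ c ∈ nodesF m, ‖amp t c‖ * chainP x r m
          ≤ ‖amp t c‖ * Gfun x r c Finset.univ ∅ := by
        intro c hc
        simp only [nodesF, Finset.mem_filter, Finset.mem_univ, true_and] at hc
        have hGr : chainP x r (Finset.univ : Finset (Fin m)).card
            ≤ Gfun x r c Finset.univ ∅ := by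
          apply Gfun_ge_chain x r hx hr hxr.le hc (Finset.univ.card) _ rfl
          intro j _ i _
          exact Finset.mem_univ _
        rw [Finset.card_univ, Fintype.card_fin] at hGr
        exact mul_le_mul_of_nonneg_left hGr (norm_nonneg _)
      have hchain : x + r ≤ chainP x r m := by
        have := chainB_ge q hr hx hxr m hm
        have heq : chainP x r m = chainB q m := by
          unfold chainP chainB; ring
        rw [heq]
        exact this
      calc (x + r) ^ (m + 1 - 1) = (x + r) * (x + r) ^ (m - 1) := by
            rw [show m + 1 - 1 = (m - 1) + 1 by omega, pow_succ]; ring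
        _ ≤ chainP x r m * SB t m := by
            apply mul_le_mul hchain (ih hm) (by positivity) ?_
            linarith [hchain, hx, hr]
        _ = ∑ c ∈ nodesF m, chainP x r m * ‖amp t c‖ := by
            rw [← Finset.mul_sum]; rfl
        _ ≤ ∑ c ∈ nodesF m, ‖amp t c‖ * Gfun x r c Finset.univ ∅ := by
            apply Finset.sum_le_sum
            intro c hc
            rw [mul_comm]
            exact hbound c hc
        _ = SB t (m + 1) := hrec.symm

end SSec

section Part

def cylsF (n : ℕ) : Finset (Set Omega) := (nodesF n).image (fun p => Cyl p)

lemma cyl_nonempty {n : ℕ} {p : Fin n → Fin n → Prop} (hp : IsNode p) :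
    ∃ ω : Omega, ω ∈ Cyl p := by
  refine ⟨⟨fun i j => ∃ (hi : i < n) (hj : j < n), p ⟨i, hi⟩ ⟨j, hj⟩, ?_, ?_, ?_⟩, ?_⟩
  · rintro i ⟨hi, hi', h⟩
    exact hp.1 _ h
  · rintro i j k ⟨hi, hj, hij⟩ ⟨hj', hk, hjk⟩
    exact ⟨hi, hk, hp.2.1 _ _ _ hij hjk⟩
  · rintro i j ⟨hi, hj, hij⟩
    exact hp.2.2 _ _ hij
  · intro i j
    constructor
    · rintro ⟨hi, hj, hij⟩
      have e1 : (⟨(i : ℕ), hi⟩ : Fin n) = i := by apply Fin.ext; rfl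
      have e2 : (⟨(j : ℕ), hj⟩ : Fin n) = j := by apply Fin.ext; rfl
      rwa [e1, e2] at hij
    · intro h
      exact ⟨i.isLt, j.isLt, h⟩

lemma cyl_inj {n : ℕ} {p p' : Fin n → Fin n → Prop} (hp : IsNode p)
    (h : Cyl p = Cyl p') : p = p' := by
  obtain ⟨ω, hω⟩ := cyl_nonempty hp
  have hω' : ω ∈ Cyl p' := h ▸ hω
  funext i j
  exact propext ((hω i j).symm.trans (hω' i j))

lemma restrict_omega (ω : Omega) (n : ℕ) :
    IsNode (fun i j : Fin n => ω.1 i j) := by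
  refine ⟨fun i h => ω.2.1 _ h, fun i j k hij hjk => ω.2.2.1 _ _ _ hij hjk, ?_⟩
  intro i j h
  exact ω.2.2.2 _ _ h

lemma cylsF_isPartition {n : ℕ} (hn : 1 ≤ n) : IsPartition (cylsF n) := by
  refine ⟨?_, ?_, ?_⟩
  · intro s hs
    simp only [cylsF, Finset.mem_image] at hs
    obtain ⟨p, hp, rfl⟩ := hs
    simp only [nodesF, Finset.mem_filter, Finset.mem_univ, true_and] at hp
    exact InAlg.basic hn p hp
  · intro s hs t ht hst
    simp only [cylsF, Finset.coe_image, Set.mem_image, Finset.mem_coe] at hs ht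
    obtain ⟨p, hp, rfl⟩ := hs
    obtain ⟨p', hp', rfl⟩ := ht
    rw [Set.disjoint_left]
    intro ω hω hω'
    apply hst
    have : p = p' := by
      funext i j
      exact propext ((hω i j).symm.trans (hω' i j))
    rw [this]
  · apply Set.eq_univ_iff_forall.mpr
    intro ω
    rw [Set.mem_sUnion]
    refine ⟨Cyl (fun i j : Fin n => ω.1 i j), ?_, ?_⟩
    · simp only [cylsF, Finset.coe_image, Set.mem_image, Finset.mem_coe]
      refine ⟨_, ?_, rfl⟩
      simp only [nodesF, Finset.mem_filter, Finset.mem_univ, true_and]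
      exact restrict_omega ω n
    · intro i j
      exact Iff.rfl

lemma sum_cylsF (μ : Set Omega → ℂ) (t : ℕ → ℂ) (hμ : IsCSG t μ) {n : ℕ}
    (hn : 1 ≤ n) :
    ∑ s ∈ cylsF n, ‖μ s‖ = SB t n := by
  unfold cylsF
  rw [Finset.sum_image]
  · apply Finset.sum_congr rfl
    intro p hp
    simp only [nodesF, Finset.mem_filter, Finset.mem_univ, true_and] at hp
    rw [hμ.2 n hn p hp]
  · intro p hp p' _ h
    simp only [nodesF, Finset.mem_filter, Finset.mem_univ, true_and] at hp
    exact cyl_inj (Finset.mem_filter.mp (Finset.mem_coe.mp hp)).2 h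

end Part
/-- for q ≠ 0 not a real number in (0,1], the series
Σ_{n≥1} (|1−q|·Σ_{ϖ=1}^{n} |q|^{n−ϖ} + |q|^n − 1) diverges; hence complex percolation,
the ℂSG measure with couplings t_k = ((1−q)/q)^k, is not of bounded variation. -/
theorem statement_16 (q : ℂ) (hq : q ≠ 0)
    (hqr : ¬ ∃ x : ℝ, 0 < x ∧ x ≤ 1 ∧ q = (x : ℂ))
    (t : ℕ → ℂ) (ht : ∀ k : ℕ, t k = ((1 - q) / q) ^ k) :
    ¬ (∃ L : ℝ, Filter.Tendsto (fun N : ℕ => ∑ n ∈ Finset.Ico 1 N,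
        (‖1 - q‖ * (∑ w ∈ Finset.Icc 1 n, ‖q‖ ^ (n - w)) +
          ‖q‖ ^ n - 1)) Filter.atTop (nhds L)) ∧
    (∀ μ : Set Omega → ℂ, IsCSG t μ → ¬ BoundedVariation μ) := by
  obtain ⟨hr, hx, hxr⟩ := region_facts q hq hqr
  constructor
  · exact part1 q hq hqr
  · intro μ hμ hBV
    obtain ⟨M, hM⟩ := hBV
    obtain ⟨k, hk⟩ := pow_unbounded_of_one_lt M hxr
    have h1 : SB t (k + 1) ≤ M := by
      rw [← sum_cylsF μ t hμ (by omega : 1 ≤ k + 1)]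
      exact hM _ (cylsF_isPartition (by omega))
    have h2 : (‖1 - q‖ + ‖q‖) ^ k ≤ SB t (k + 1) := by
      have := SB_ge_pow q hq hqr t ht (k + 1) (by omega)
      simpa using this
    linarith

end
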